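/- Let G1 be a cyclic group of prime order p, g ∈ G1, x ∈ ZMod p, and let f be a polynomial over ZMod p that factors as f(T) = (T + z)*d(T) + ρ0 with ρ0 ≠ 0, where z ∈ ZMod p and x + z ≠ 0. If Ψ = (g^(f(x)))^((x+z)⁻¹), then g^((x+z)⁻¹) = (Ψ * g^(−d(x)))^(ρ0⁻¹). -/

import Mathlib

/-- Abstract exponentiation of a commutative group of prime order `p`
by scalars in `ZMod p`. -/
structure PPow (p : ℕ) (G : Type*) [CommGroup G] where
  pow : G → ZMod p → G
  pow_add : ∀ g a b, pow g (a + b) = pow g a * pow g b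
  mul_pow : ∀ g h a, pow (g * h) a = pow g a * pow h a
  pow_pow : ∀ g a b, pow (pow g a) b = pow g (a * b)
  pow_one' : ∀ g, pow g 1 = g

open Polynomial in
theorem stmt10 {p : ℕ} [Fact p.Prime] {G1 : Type*} [CommGroup G1]
    (P : PPow p G1) (g : G1) (x z ρ0 : ZMod p)
    (f d : Polynomial (ZMod p))
    (hf : f = (X + C z) * d + C ρ0)
    (hρ : ρ0 ≠ 0) (hxz : x + z ≠ 0)
    (Ψ : G1) (hΨ : Ψ = P.pow (P.pow g (f.eval x)) (x + z)⁻¹) :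
    P.pow g (x + z)⁻¹ = P.pow (Ψ * P.pow g (-(d.eval x))) ρ0⁻¹ := by
  rw [hΨ, P.mul_pow, P.pow_pow, P.pow_pow, P.pow_pow, ← P.pow_add]
  congr 1
  have h1 : f.eval x = (x + z) * d.eval x + ρ0 := by simp [hf]
  field_simp [h1]
  rw [h1]
  ring
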